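/- Let H be a Hopf algebra over a field k and χ ∈ H⊗H a counital 2-cocycle. Then the following identity holds in H⊗H: χ⁽¹⁾ ⊗ S(χ′⁻⁽¹⁾·χ⁽²⁾)·χ′⁻⁽²⁾ = (χ⁻⁽¹⁾)₁ ⊗ S((χ⁻⁽¹⁾)₂)·χ⁻⁽²⁾, where χ′⁻⁽¹⁾⊗χ′⁻⁽²⁾ denotes a second, independently summed copy of χ⁻¹, and on the right the coproduct is applied to the first leg of χ⁻¹. -/

import Mathlib

open scoped TensorProduct
open TensorProduct LinearMap

namespace PaperTwist

variable (k H : Type) [Field k] [Ring H] [HopfAlgebra k H]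

/-- The comultiplication of `H`. -/
noncomputable def Δ : H →ₗ[k] H ⊗[k] H := Coalgebra.comul

/-- The counit of `H`. -/
noncomputable def ε : H →ₗ[k] k := Coalgebra.counit

/-- The antipode of `H`. -/
noncomputable def S : H →ₗ[k] H := HopfAlgebra.antipode k

/-- `χ`, with (two-sided) inverse `χ'` in the algebra `H ⊗ H`, is a counital 2-cocycle:
`χ₂₃ · ((id ⊗ Δ) χ) = χ₁₂ · ((Δ ⊗ id) χ)` and `(ε ⊗ id) χ = 1 = (id ⊗ ε) χ`. -/
def IsCocycle (χ χ' : H ⊗[k] H) : Prop :=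
  χ * χ' = 1 ∧ χ' * χ = 1 ∧
    (1 ⊗ₜ[k] χ) * (LinearMap.lTensor H (Δ k H) χ) =
      (TensorProduct.assoc k H H H) ((χ ⊗ₜ[k] 1) * (LinearMap.rTensor H (Δ k H) χ)) ∧
    (TensorProduct.lid k H) ((LinearMap.rTensor H (ε k H)) χ) = 1 ∧
    (TensorProduct.rid k H) ((LinearMap.lTensor H (ε k H)) χ) = 1

variable (V : Type) [AddCommGroup V] [Module k V]

/-- A (left-left) crossed module (Drinfeld–Radford–Yetter module) over `H`:
a left action `ρ` and a counital coassociative left coaction `β` satisfying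
`h₁·v₍₁₎ ⊗ h₂ ▷ v₍∞₎ = (h₁ ▷ v)₍₁₎·h₂ ⊗ (h₁ ▷ v)₍∞₎`, the latter expressed via arbitrary
finite representations of `Δ h`. -/
structure IsCrossedModule (ρ : H →ₗ[k] V →ₗ[k] V) (β : V →ₗ[k] H ⊗[k] V) : Prop where
  act_one : ∀ v : V, ρ 1 v = v
  act_mul : ∀ (g h : H) (v : V), ρ (g * h) v = ρ g (ρ h v)
  coact_counit : ∀ v : V, (TensorProduct.lid k V) ((LinearMap.rTensor V (ε k H)) (β v)) = v
  coact_coassoc : ∀ v : V,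
    (LinearMap.rTensor V (Δ k H)) (β v)
      = (TensorProduct.assoc k H H V).symm ((LinearMap.lTensor H β) (β v))
  compat : ∀ (h : H) (v : V) (ι : Type) (s : Finset ι) (h1 h2 : ι → H),
    Δ k H h = ∑ i ∈ s, h1 i ⊗ₜ[k] h2 i →
    ∑ i ∈ s, (TensorProduct.map (LinearMap.mulLeft k (h1 i)) (ρ (h2 i))) (β v)
      = ∑ i ∈ s, (LinearMap.rTensor V (LinearMap.mulRight k (h2 i))) (β (ρ (h1 i) v))

/-- The twisted coaction `β_χ(v) = χ⁽¹⁾·(χ⁻⁽¹⁾ ▷ v)₍₁₎·χ⁻⁽²⁾ ⊗ χ⁽²⁾ ▷ (χ⁻⁽¹⁾ ▷ v)₍∞₎`,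
expressed through finite representations `χ = ∑ x1 i ⊗ x2 i`, `χ⁻¹ = ∑ y1 j ⊗ y2 j`. -/
noncomputable def twistedCoaction (ρ : H →ₗ[k] V →ₗ[k] V) (β : V →ₗ[k] H ⊗[k] V)
    {ι₁ ι₂ : Type} (s₁ : Finset ι₁) (x1 x2 : ι₁ → H) (s₂ : Finset ι₂) (y1 y2 : ι₂ → H) :
    V →ₗ[k] H ⊗[k] V :=
  ∑ i ∈ s₁, ∑ j ∈ s₂,
    (TensorProduct.map ((LinearMap.mulLeft k (x1 i)) ∘ₗ (LinearMap.mulRight k (y2 j)))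
        (ρ (x2 i))) ∘ₗ β ∘ₗ (ρ (y1 j))

/-- The twisted coproduct `Δ_χ(h) = χ · Δ(h) · χ⁻¹`. -/
noncomputable def twistedComul (χ χ' : H ⊗[k] H) : H →ₗ[k] H ⊗[k] H :=
  (LinearMap.mulLeft k χ) ∘ₗ (LinearMap.mulRight k χ') ∘ₗ (Δ k H)

end PaperTwist

open PaperTwist

open Coalgebra HopfAlgebra

section ConvAux
variable {R C A : Type*} [CommSemiring R]
  [AddCommMonoid C] [Module R C] [Coalgebra R C]
  [Semiring A] [Algebra R A]

variable {R C A : Type*} [CommSemiring R]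
  [AddCommMonoid C] [Module R C] [Coalgebra R C]
  [Semiring A] [Algebra R A]

/-- Convolution product on linear maps from a coalgebra to an algebra. -/
noncomputable def myconv (f g : C →ₗ[R] A) : C →ₗ[R] A :=
  LinearMap.mul' R A ∘ₗ TensorProduct.map f g ∘ₗ Coalgebra.comul

lemma myconv_apply (f g : C →ₗ[R] A) (x : C) :
    myconv f g x = LinearMap.mul' R A (TensorProduct.map f g (Coalgebra.comul x)) := rfl

lemma myconv_repr (f g : C →ₗ[R] A) {x : C} {ι : Type*} (r : Coalgebra.Repr R x ι) :
    myconv f g x = ∑ i ∈ r.index, f (r.left i) * g (r.right i) := by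
  rw [myconv_apply, ← r.eq]
  simp [map_sum]

lemma myconv_unit_left (f : C →ₗ[R] A) :
    myconv (Algebra.linearMap R A ∘ₗ Coalgebra.counit) f = f := by
  ext x
  rw [myconv_repr _ _ (ℛ R x)]
  have h := congrArg (TensorProduct.lid R C) (Coalgebra.sum_counit_tmul_eq (ℛ R x))
  simp only [map_sum, lid_tmul, one_smul] at h
  calc ∑ i ∈ (ℛ R x).index,
        (Algebra.linearMap R A ∘ₗ Coalgebra.counit) ((ℛ R x).left i) * f ((ℛ R x).right i)
      = ∑ i ∈ (ℛ R x).index, f (Coalgebra.counit (R := R) ((ℛ R x).left i) • (ℛ R x).right i) := by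
        refine Finset.sum_congr rfl fun i _ => ?_
        simp [Algebra.smul_def]
    _ = f x := by rw [← map_sum, h]

lemma myconv_unit_right (f : C →ₗ[R] A) :
    myconv f (Algebra.linearMap R A ∘ₗ Coalgebra.counit) = f := by
  ext x
  rw [myconv_repr _ _ (ℛ R x)]
  have h := congrArg (TensorProduct.rid R C) (Coalgebra.sum_tmul_counit_eq (ℛ R x))
  simp only [map_sum, rid_tmul, one_smul] at h
  calc ∑ i ∈ (ℛ R x).index,
        f ((ℛ R x).left i) * (Algebra.linearMap R A ∘ₗ Coalgebra.counit) ((ℛ R x).right i)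
      = ∑ i ∈ (ℛ R x).index, f (Coalgebra.counit (R := R) ((ℛ R x).right i) • (ℛ R x).left i) := by
        refine Finset.sum_congr rfl fun i _ => ?_
        simp [Algebra.smul_def, Algebra.commutes, mul_comm]
    _ = f x := by rw [← map_sum, h]

lemma myconv_assoc (f g h : C →ₗ[R] A) :
    myconv (myconv f g) h = myconv f (myconv g h) := by
  ext x
  have key := Coalgebra.sum_tmul_tmul_eq (ℛ R x)
    (fun i => ℛ R ((ℛ R x).left i)) (fun i => ℛ R ((ℛ R x).right i))
  have key2 := congrArg
    (LinearMap.mul' R A ∘ₗ TensorProduct.map f (LinearMap.mul' R A ∘ₗ TensorProduct.map g h)) key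
  simp only [map_sum, LinearMap.comp_apply, TensorProduct.map_tmul, mul'_apply] at key2
  calc myconv (myconv f g) h x
      = ∑ i ∈ (ℛ R x).index, myconv f g ((ℛ R x).left i) * h ((ℛ R x).right i) :=
        myconv_repr _ _ (ℛ R x)
    _ = ∑ i ∈ (ℛ R x).index, ∑ j ∈ (ℛ R ((ℛ R x).left i)).index,
          f ((ℛ R ((ℛ R x).left i)).left j) *
            (g ((ℛ R ((ℛ R x).left i)).right j) * h ((ℛ R x).right i)) := by
        refine Finset.sum_congr rfl fun i _ => ?_
        rw [myconv_repr f g (ℛ R ((ℛ R x).left i)), Finset.sum_mul]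
        exact Finset.sum_congr rfl fun j _ => by rw [mul_assoc]
    _ = ∑ i ∈ (ℛ R x).index, ∑ j ∈ (ℛ R ((ℛ R x).right i)).index,
          f ((ℛ R x).left i) *
            (g ((ℛ R ((ℛ R x).right i)).left j) * h ((ℛ R ((ℛ R x).right i)).right j)) := key2
    _ = ∑ i ∈ (ℛ R x).index, f ((ℛ R x).left i) * myconv g h ((ℛ R x).right i) := by
        refine Finset.sum_congr rfl fun i _ => ?_
        rw [myconv_repr g h (ℛ R ((ℛ R x).right i)), Finset.mul_sum]
    _ = myconv f (myconv g h) x := (myconv_repr _ _ (ℛ R x)).symm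

lemma myconv_unique {f g m : C →ₗ[R] A}
    (h1 : myconv f m = Algebra.linearMap R A ∘ₗ Coalgebra.counit)
    (h2 : myconv m g = Algebra.linearMap R A ∘ₗ Coalgebra.counit) : f = g := by
  have h := myconv_assoc f m g
  rw [h1, h2, myconv_unit_left, myconv_unit_right] at h
  exact h.symm


end ConvAux

section AntiAux

variable {k H : Type} [Field k] [Ring H] [HopfAlgebra k H]

lemma comulC_tmul (a b : H) :
    Coalgebra.comul (R := k) (a ⊗ₜ[k] b) =
      TensorProduct.tensorTensorTensorComm k H H H H
        (Coalgebra.comul a ⊗ₜ[k] Coalgebra.comul b) := rfl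

lemma counitC_tmul (a b : H) :
    Coalgebra.counit (R := k) (a ⊗ₜ[k] b) =
      Coalgebra.counit (R := k) a * Coalgebra.counit (R := k) b := by
  simp [mul_comm]

lemma conv_F_M :
    myconv ((antipode (R := k) (A := H)) ∘ₗ LinearMap.mul' k H) (LinearMap.mul' k H) =
      Algebra.linearMap k H ∘ₗ Coalgebra.counit := by
  apply TensorProduct.ext'
  intro a b
  have key : ∑ i ∈ (ℛ k a).index, ∑ j ∈ (ℛ k b).index,
        antipode (R := k) ((ℛ k a).left i * (ℛ k b).left j) *
          ((ℛ k a).right i * (ℛ k b).right j)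
      = algebraMap k H (Coalgebra.counit (a * b)) := by
    rw [← mul_antipode_rTensor_comul_apply (a * b), Bialgebra.comul_mul,
      ← (ℛ k a).eq, ← (ℛ k b).eq, Finset.sum_mul_sum]
    simp only [Algebra.TensorProduct.tmul_mul_tmul, map_sum, rTensor_tmul, mul'_apply]
  have lhs : myconv ((antipode (R := k) (A := H)) ∘ₗ LinearMap.mul' k H) (LinearMap.mul' k H)
        (a ⊗ₜ[k] b)
      = ∑ i ∈ (ℛ k a).index, ∑ j ∈ (ℛ k b).index,
          antipode (R := k) ((ℛ k a).left i * (ℛ k b).left j) *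
            ((ℛ k a).right i * (ℛ k b).right j) := by
    rw [myconv_apply, comulC_tmul, ← (ℛ k a).eq, ← (ℛ k b).eq]
    simp only [TensorProduct.sum_tmul, TensorProduct.tmul_sum, map_sum,
      tensorTensorTensorComm_tmul, TensorProduct.map_tmul, LinearMap.comp_apply, mul'_apply]
    exact Finset.sum_comm (s := (ℛ k b).index) (t := (ℛ k a).index)
  rw [lhs, key, LinearMap.comp_apply, counitC_tmul, Bialgebra.counit_mul]
  rfl

lemma conv_M_G :
    myconv (LinearMap.mul' k H)
      (LinearMap.mul' k H ∘ₗ TensorProduct.map (antipode (R := k)) (antipode (R := k)) ∘ₗ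
        (TensorProduct.comm k H H).toLinearMap) =
      Algebra.linearMap k H ∘ₗ Coalgebra.counit := by
  apply TensorProduct.ext'
  intro a b
  rw [myconv_apply, comulC_tmul, ← (ℛ k a).eq, ← (ℛ k b).eq]
  simp only [TensorProduct.sum_tmul, TensorProduct.tmul_sum, map_sum,
    tensorTensorTensorComm_tmul, TensorProduct.map_tmul, LinearMap.comp_apply,
    LinearEquiv.coe_coe, TensorProduct.comm_tmul, mul'_apply]
  have step : ∀ i ∈ (ℛ k a).index,
      (∑ j ∈ (ℛ k b).index,
        ((ℛ k a).left i * (ℛ k b).left j) *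
          (antipode (R := k) ((ℛ k b).right j) * antipode (R := k) ((ℛ k a).right i)))
      = Coalgebra.counit (R := k) b •
          ((ℛ k a).left i * antipode (R := k) ((ℛ k a).right i)) := by
    intro i _
    have : ∀ j ∈ (ℛ k b).index,
        ((ℛ k a).left i * (ℛ k b).left j) *
          (antipode (R := k) ((ℛ k b).right j) * antipode (R := k) ((ℛ k a).right i))
        = (ℛ k a).left i *
            (((ℛ k b).left j * antipode (R := k) ((ℛ k b).right j)) *
              antipode (R := k) ((ℛ k a).right i)) := by
      intro j _
      rw [mul_assoc, ← mul_assoc ((ℛ k b).left j)]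
    rw [Finset.sum_congr rfl this, ← Finset.mul_sum, ← Finset.sum_mul,
      sum_mul_antipode_eq_smul (ℛ k b)]
    simp [smul_mul_assoc, mul_smul_comm]
  rw [Finset.sum_comm, Finset.sum_congr rfl step, ← Finset.smul_sum,
    sum_mul_antipode_eq_smul (ℛ k a)]
  rw [smul_smul, mul_comm, Algebra.smul_def, mul_one]
  show algebraMap k H _ = Algebra.linearMap k H (Coalgebra.counit (a ⊗ₜ[k] b))
  rw [counitC_tmul, Algebra.linearMap_apply]

lemma antipode_mul' (a b : H) :
    antipode (R := k) (a * b) = antipode (R := k) b * antipode (R := k) a := by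
  have h := myconv_unique (conv_F_M (k := k) (H := H)) conv_M_G
  have h2 := congrArg (fun f : (H ⊗[k] H) →ₗ[k] H => f (a ⊗ₜ[k] b)) h
  simpa using h2


end AntiAux

section MainAux
variable {k H : Type} [Field k] [Ring H] [HopfAlgebra k H]



/-- `Tm (a ⊗ b) = S(a) * b`. -/
noncomputable def Tm (k H : Type) [Field k] [Ring H] [HopfAlgebra k H] :
    H ⊗[k] H →ₗ[k] H :=
  LinearMap.mul' k H ∘ₗ rTensor H (antipode (R := k))

lemma Tm_tmul (a b : H) : Tm k H (a ⊗ₜ[k] b) = antipode (R := k) a * b := rfl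

lemma Tm_mul_tmul (y : H ⊗[k] H) (a b : H) :
    Tm k H (y * (a ⊗ₜ[k] b)) = antipode (R := k) a * Tm k H y * b := by
  induction y using TensorProduct.induction_on with
  | zero => simp
  | tmul u v =>
    simp only [Algebra.TensorProduct.tmul_mul_tmul, Tm_tmul, antipode_mul', mul_assoc]
  | add u v hu hv => simp [add_mul, hu, hv, mul_add]

lemma Tm_comul_mul (g : H) (x : H ⊗[k] H) :
    Tm k H (Coalgebra.comul (R := k) g * x) = Coalgebra.counit (R := k) g • Tm k H x := by
  induction x using TensorProduct.induction_on with
  | zero => simp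
  | tmul a b =>
    rw [Tm_mul_tmul]
    have hTg : Tm k H (Coalgebra.comul (R := k) g) = algebraMap k H (Coalgebra.counit g) :=
      mul_antipode_rTensor_comul_apply g
    rw [hTg, Tm_tmul, Algebra.algebraMap_eq_smul_one, mul_smul_comm, smul_mul_assoc, mul_one]
  | add u v hu hv => simp [mul_add, hu, hv]

lemma Phi_key (w : H ⊗[k] H) (ξ : H ⊗[k] (H ⊗[k] H)) :
    lTensor H (Tm k H) ((lTensor H (Coalgebra.comul (R := k)) w) * ξ)
      = ((TensorProduct.rid k H ((lTensor H (Coalgebra.counit (R := k))) w)) ⊗ₜ[k] (1 : H)) *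
          (lTensor H (Tm k H) ξ) := by
  induction w using TensorProduct.induction_on with
  | zero => simp
  | add u v hu hv => simp only [map_add, add_mul, hu, hv, add_tmul]
  | tmul h g =>
    induction ξ using TensorProduct.induction_on with
    | zero => simp
    | add u v hu hv => simp only [mul_add, map_add, hu, hv]
    | tmul c x =>
      simp only [lTensor_tmul, Algebra.TensorProduct.tmul_mul_tmul, rid_tmul]
      rw [Tm_comul_mul]
      rw [tmul_smul, smul_tmul', smul_mul_assoc, one_mul]


noncomputable def rcomulAlg (k H : Type) [Field k] [Ring H] [HopfAlgebra k H] :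
    (H ⊗[k] H) →ₐ[k] (H ⊗[k] H) ⊗[k] H :=
  Algebra.TensorProduct.map (Bialgebra.comulAlgHom k H) (AlgHom.id k H)

lemma rTensor_comul_eq (x : H ⊗[k] H) :
    rTensor H (Coalgebra.comul (R := k) (A := H)) x = rcomulAlg k H x := by
  induction x using TensorProduct.induction_on with
  | zero => simp
  | tmul a b =>
    simp [rcomulAlg, Algebra.TensorProduct.map_tmul, Bialgebra.comulAlgHom_apply, rTensor_tmul]
  | add u v hu hv => simp only [map_add, hu, hv]

lemma rTensor_comul_mul (x y : H ⊗[k] H) :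
    rTensor H (Coalgebra.comul (R := k) (A := H)) (x * y)
      = rTensor H (Coalgebra.comul (R := k) (A := H)) x *
          rTensor H (Coalgebra.comul (R := k) (A := H)) y := by
  simp only [rTensor_comul_eq, map_mul]

lemma rTensor_comul_one :
    rTensor H (Coalgebra.comul (R := k) (A := H)) 1 = 1 := by
  rw [rTensor_comul_eq]; exact map_one _

lemma assoc_eq (x : (H ⊗[k] H) ⊗[k] H) :
    TensorProduct.assoc k H H H x = Algebra.TensorProduct.assoc k k k H H H x := rfl

lemma assoc_mul (x y : (H ⊗[k] H) ⊗[k] H) :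
    TensorProduct.assoc k H H H (x * y)
      = TensorProduct.assoc k H H H x * TensorProduct.assoc k H H H y := by
  simp only [assoc_eq, map_mul]

lemma assoc_one : TensorProduct.assoc k H H H (1 : (H ⊗[k] H) ⊗[k] H) = 1 := by
  rw [assoc_eq]; exact map_one _

lemma step1 (χ' : H ⊗[k] H) (x : H ⊗[k] H) :
    lTensor H (mulLeft k χ' ∘ₗ (TensorProduct.mk k H H).flip 1) x
      = (1 ⊗ₜ[k] χ') * (TensorProduct.assoc k H H H (x ⊗ₜ[k] 1)) := by
  induction x using TensorProduct.induction_on with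
  | zero =>
    rw [map_zero, TensorProduct.zero_tmul, LinearEquiv.map_zero, mul_zero]
  | tmul a b =>
    simp only [lTensor_tmul, LinearMap.comp_apply, LinearMap.flip_apply,
      TensorProduct.mk_apply, LinearMap.mulLeft_apply, TensorProduct.assoc_tmul,
      Algebra.TensorProduct.tmul_mul_tmul, one_mul]
  | add u v hu hv => simp only [map_add, add_tmul, mul_add, hu, hv]

end MainAux

/-- For a counital 2-cocycle `χ ∈ H ⊗ H` (with inverse `χ⁻¹`),
`χ⁽¹⁾ ⊗ S(χ′⁻⁽¹⁾·χ⁽²⁾)·χ′⁻⁽²⁾ = (χ⁻⁽¹⁾)₁ ⊗ S((χ⁻⁽¹⁾)₂)·χ⁻⁽²⁾` in `H ⊗ H`.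
On the left, the map `z ↦ S(χ⁻⁽¹⁾·z)·χ⁻⁽²⁾` (implemented as
`z ↦ (mul) ∘ (S ⊗ id) (χ⁻¹ · (z ⊗ 1))`) is applied to the second leg of `χ`; on the right,
`Δ ⊗ id` is applied to `χ⁻¹` and then `S a · b` multiplies the last two legs. -/

theorem statement_14
    {k H : Type} [Field k] [Ring H] [HopfAlgebra k H]
    (hS : Function.Bijective (S k H))
    (χ χ' : H ⊗[k] H) (hχ : IsCocycle k H χ χ') :
    (LinearMap.lTensor H
        ((LinearMap.mul' k H) ∘ₗ (LinearMap.rTensor H (S k H)) ∘ₗ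
          (LinearMap.mulLeft k χ') ∘ₗ ((TensorProduct.mk k H H).flip 1))) χ
      = (LinearMap.lTensor H ((LinearMap.mul' k H) ∘ₗ (LinearMap.rTensor H (S k H))))
          ((TensorProduct.assoc k H H H) ((LinearMap.rTensor H (Δ k H)) χ')) := by
  obtain ⟨h1, h2, hco, _, hcr⟩ := hχ
  simp only [PaperTwist.Δ, PaperTwist.S, PaperTwist.ε] at hco hcr ⊢
  -- Left-hand side as `lTensor H Tm` of `χ'₂₃ * χ₁₂`
  have hL : (LinearMap.lTensor H
        ((LinearMap.mul' k H) ∘ₗ (LinearMap.rTensor H (HopfAlgebra.antipode (R := k))) ∘ₗ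
          (LinearMap.mulLeft k χ') ∘ₗ ((TensorProduct.mk k H H).flip 1))) χ
      = lTensor H (Tm k H) ((1 ⊗ₜ[k] χ') * (TensorProduct.assoc k H H H (χ ⊗ₜ[k] 1))) := by
    rw [show ((LinearMap.mul' k H) ∘ₗ (LinearMap.rTensor H (HopfAlgebra.antipode (R := k))) ∘ₗ
          (LinearMap.mulLeft k χ') ∘ₗ ((TensorProduct.mk k H H).flip 1))
        = Tm k H ∘ₗ ((LinearMap.mulLeft k χ') ∘ₗ ((TensorProduct.mk k H H).flip 1)) from rfl,
      lTensor_comp, LinearMap.comp_apply, step1]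
  rw [hL]
  -- `χ'₂₃ * χ₁₂ = ((id ⊗ Δ) χ) * ((Δ ⊗ id) χ')` from the cocycle condition
  have hB : (TensorProduct.assoc k H H H (rTensor H (Coalgebra.comul (R := k)) χ)) *
      (TensorProduct.assoc k H H H (rTensor H (Coalgebra.comul (R := k)) χ')) = 1 := by
    rw [← assoc_mul, ← rTensor_comul_mul, h1, rTensor_comul_one, assoc_one]
  have hco' : (TensorProduct.assoc k H H H (χ ⊗ₜ[k] 1)) *
        (TensorProduct.assoc k H H H (rTensor H (Coalgebra.comul (R := k)) χ))
      = (1 ⊗ₜ[k] χ) * (lTensor H (Coalgebra.comul (R := k)) χ) := by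
    rw [← assoc_mul]; exact hco.symm
  have hP1 : (1 ⊗ₜ[k] χ') * ((1 : H) ⊗ₜ[k] χ) = 1 := by
    rw [Algebra.TensorProduct.tmul_mul_tmul, one_mul, h2]
    exact Algebra.TensorProduct.one_def.symm
  have key2 : (1 ⊗ₜ[k] χ') * (TensorProduct.assoc k H H H (χ ⊗ₜ[k] 1))
      = (lTensor H (Coalgebra.comul (R := k)) χ) *
          (TensorProduct.assoc k H H H (rTensor H (Coalgebra.comul (R := k)) χ')) := by
    have e1 : (1 ⊗ₜ[k] χ') * (TensorProduct.assoc k H H H (χ ⊗ₜ[k] 1)) *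
        ((TensorProduct.assoc k H H H (rTensor H (Coalgebra.comul (R := k)) χ)) *
          (TensorProduct.assoc k H H H (rTensor H (Coalgebra.comul (R := k)) χ')))
        = (1 ⊗ₜ[k] χ') * (TensorProduct.assoc k H H H (χ ⊗ₜ[k] 1)) := by
      rw [hB, mul_one]
    calc (1 ⊗ₜ[k] χ') * (TensorProduct.assoc k H H H (χ ⊗ₜ[k] 1))
        = (1 ⊗ₜ[k] χ') * (((TensorProduct.assoc k H H H (χ ⊗ₜ[k] 1)) *
            (TensorProduct.assoc k H H H (rTensor H (Coalgebra.comul (R := k)) χ))) *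
              (TensorProduct.assoc k H H H (rTensor H (Coalgebra.comul (R := k)) χ'))) := by
          rw [← e1]; simp only [mul_assoc]
      _ = (1 ⊗ₜ[k] χ') * ((((1 : H) ⊗ₜ[k] χ) * (lTensor H (Coalgebra.comul (R := k)) χ)) *
            (TensorProduct.assoc k H H H (rTensor H (Coalgebra.comul (R := k)) χ'))) := by
          rw [hco']
      _ = ((1 ⊗ₜ[k] χ') * ((1 : H) ⊗ₜ[k] χ)) * ((lTensor H (Coalgebra.comul (R := k)) χ) *
            (TensorProduct.assoc k H H H (rTensor H (Coalgebra.comul (R := k)) χ'))) := by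
          simp only [mul_assoc]
      _ = (lTensor H (Coalgebra.comul (R := k)) χ) *
            (TensorProduct.assoc k H H H (rTensor H (Coalgebra.comul (R := k)) χ')) := by
          rw [hP1, one_mul]
  rw [key2, Phi_key, hcr, ← Algebra.TensorProduct.one_def, one_mul]
  rfl
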